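/- Let f, g : ℝ → ℝ satisfy f(x)·f(y) = g(max(|x|, |y|)) for all x, y ∈ ℝ. If f(y₀) ≠ 0 for some y₀ ∈ ℝ, then f(x) = f(y₀) for every x with |x| ≤ |y₀|. -/
import Mathlib

/-- The `p = ∞` case: if `f(x)·f(y) = g(max(|x|,|y|))` for all `x, y`, then `f`
is constant on every symmetric interval on which it is nonzero. -/
theorem chebyshev_isotropic_product_is_constant
    (f g : ℝ → ℝ) (h : ∀ x y : ℝ, f x * f y = g (max |x| |y|))
    (y₀ : ℝ) (hy₀ : f y₀ ≠ 0) :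
    ∀ x : ℝ, |x| ≤ |y₀| → f x = f y₀ := by
  intro x hx
  have h1 := h x y₀
  have h2 := h y₀ y₀
  rw [max_eq_right hx] at h1
  rw [max_self] at h2
  exact mul_right_cancel₀ hy₀ (h1.trans h2.symm)
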